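/- Let M be a standard dynamic Odintsov–Wansing model, φ a formula, and M' the filtration of M through the Fischer–Ladner closure FL(φ). Then for every ψ ∈ FL(φ) and every state x of M: x verifies ψ in M iff [x] verifies ψ in M', and x falsifies ψ in M iff [x] falsifies ψ in M'. -/

import Mathlib

mutual
inductive DynProg : Type where
  | atom : ℕ → DynProg
  | seq : DynProg → DynProg → DynProg
  | union : DynProg → DynProg → DynProg
  | star : DynProg → DynProg
  | test : DynForm → DynProg
inductive DynForm : Type where
  | atom : ℕ → DynForm
  | bot  : DynForm
  | snot : DynForm → DynForm
  | and  : DynForm → DynForm → DynForm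
  | or   : DynForm → DynForm → DynForm
  | imp  : DynForm → DynForm → DynForm
  | box  : DynProg → DynForm → DynForm
  | dia  : DynProg → DynForm → DynForm
end

def DynForm.neg (φ : DynForm) : DynForm := .imp φ .bot

def DynForm.biimp (φ ψ : DynForm) : DynForm := .and (.imp φ ψ) (.imp ψ φ)

structure DynModel : Type 1 where
  S : Type
  ne : Nonempty S
  Ra : ℕ → S → S → Prop
  Vp : ℕ → S → Prop
  Vm : ℕ → S → Prop

mutual
def progRel (M : DynModel) : DynProg → M.S → M.S → Prop
  | .atom a, x, y => M.Ra a x y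
  | .seq α β, x, z => ∃ y, progRel M α x y ∧ progRel M β y z
  | .union α β, x, y => progRel M α x y ∨ progRel M β x y
  | .star α, x, y => Relation.ReflTransGen (fun u v => progRel M α u v) x y
  | .test φ, x, y => x = y ∧ dverify M x φ
def dverify (M : DynModel) : M.S → DynForm → Prop
  | x, .atom p => M.Vp p x
  | _, .bot => False
  | x, .snot φ => dfalsify M x φ
  | x, .and φ ψ => dverify M x φ ∧ dverify M x ψ
  | x, .or φ ψ => dverify M x φ ∨ dverify M x ψ
  | x, .imp φ ψ => dverify M x φ → dverify M x ψ
  | x, .box α φ => ∀ y, progRel M α x y → dverify M y φ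
  | x, .dia α φ => ∃ y, progRel M α x y ∧ dverify M y φ
def dfalsify (M : DynModel) : M.S → DynForm → Prop
  | x, .atom p => M.Vm p x
  | _, .bot => True
  | x, .snot φ => dverify M x φ
  | x, .and φ ψ => dfalsify M x φ ∨ dfalsify M x ψ
  | x, .or φ ψ => dfalsify M x φ ∧ dfalsify M x ψ
  | x, .imp φ ψ => dverify M x φ ∧ dfalsify M x ψ
  | x, .box α φ => ∃ y, progRel M α x y ∧ dfalsify M y φ
  | x, .dia α φ => ∀ y, progRel M α x y → dfalsify M y φ
end

def validIn (M : DynModel) (φ : DynForm) : Prop := ∀ x : M.S, dverify M x φ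

def DynValid (φ : DynForm) : Prop := ∀ M : DynModel, validIn M φ

/-- Fischer–Ladner closure of φ, as a predicate. -/
inductive FL (φ : DynForm) : DynForm → Prop where
  | self : FL φ φ
  | snot {ψ} : FL φ (.snot ψ) → FL φ ψ
  | andL {ψ χ} : FL φ (.and ψ χ) → FL φ ψ
  | andR {ψ χ} : FL φ (.and ψ χ) → FL φ χ
  | orL {ψ χ} : FL φ (.or ψ χ) → FL φ ψ
  | orR {ψ χ} : FL φ (.or ψ χ) → FL φ χ
  | impL {ψ χ} : FL φ (.imp ψ χ) → FL φ ψ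
  | impR {ψ χ} : FL φ (.imp ψ χ) → FL φ χ
  | boxSub {α ψ} : FL φ (.box α ψ) → FL φ ψ
  | diaSub {α ψ} : FL φ (.dia α ψ) → FL φ ψ
  | testBox {χ ψ} : FL φ (.box (.test χ) ψ) → FL φ χ
  | testDia {χ ψ} : FL φ (.dia (.test χ) ψ) → FL φ χ
  | unionBoxL {α β ψ} : FL φ (.box (.union α β) ψ) → FL φ (.box α ψ)
  | unionBoxR {α β ψ} : FL φ (.box (.union α β) ψ) → FL φ (.box β ψ)
  | unionDiaL {α β ψ} : FL φ (.dia (.union α β) ψ) → FL φ (.dia α ψ)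
  | unionDiaR {α β ψ} : FL φ (.dia (.union α β) ψ) → FL φ (.dia β ψ)
  | seqBox {α β ψ} : FL φ (.box (.seq α β) ψ) → FL φ (.box α (.box β ψ))
  | seqDia {α β ψ} : FL φ (.dia (.seq α β) ψ) → FL φ (.dia α (.dia β ψ))
  | starBox {α ψ} : FL φ (.box (.star α) ψ) → FL φ (.box α (.box (.star α) ψ))
  | starDia {α ψ} : FL φ (.dia (.star α) ψ) → FL φ (.dia α (.dia (.star α) ψ))

def flSetoid (M : DynModel) (φ : DynForm) : Setoid M.S where
  r x y := ∀ ψ, FL φ ψ →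
    ((dverify M x ψ ↔ dverify M y ψ) ∧ (dfalsify M x ψ ↔ dfalsify M y ψ))
  iseqv := by
    refine ⟨fun x ψ _ => ⟨Iff.rfl, Iff.rfl⟩, fun h ψ hψ => ⟨(h ψ hψ).1.symm, (h ψ hψ).2.symm⟩,
      fun h1 h2 ψ hψ => ⟨(h1 ψ hψ).1.trans (h2 ψ hψ).1, (h1 ψ hψ).2.trans (h2 ψ hψ).2⟩⟩

/-- The filtration of M through FL(φ). -/
def filtModel (M : DynModel) (φ : DynForm) : DynModel where
  S := Quotient (flSetoid M φ)
  ne := ⟨Quotient.mk _ (Classical.choice M.ne)⟩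
  Ra a X Y := ∃ x y, X = Quotient.mk (flSetoid M φ) x ∧ Y = Quotient.mk (flSetoid M φ) y ∧ M.Ra a x y
  Vp p X := ∃ x, X = Quotient.mk (flSetoid M φ) x ∧ M.Vp p x
  Vm p X := ∃ x, X = Quotient.mk (flSetoid M φ) x ∧ M.Vm p x

/-! ### Auxiliary machinery -/

mutual
def progSize : DynProg → ℕ
  | .atom _ => 1
  | .seq α β => progSize α + progSize β + 1
  | .union α β => progSize α + progSize β + 1
  | .star α => progSize α + 1
  | .test χ => formSize χ + 1
def formSize : DynForm → ℕ
  | .atom _ => 1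
  | .bot => 1
  | .snot ψ => formSize ψ + 1
  | .and ψ χ => formSize ψ + formSize χ + 1
  | .or ψ χ => formSize ψ + formSize χ + 1
  | .imp ψ χ => formSize ψ + formSize χ + 1
  | .box α ψ => progSize α + formSize ψ + 1
  | .dia α ψ => progSize α + formSize ψ + 1
end

lemma progSize_pos (α : DynProg) : 0 < progSize α := by
  cases α <;> simp [progSize]

/-- Tests occurring in a program. -/
inductive TestIn : DynProg → DynForm → Prop where
  | test (χ) : TestIn (.test χ) χ
  | seqL {α β χ} : TestIn α χ → TestIn (.seq α β) χ
  | seqR {α β χ} : TestIn β χ → TestIn (.seq α β) χ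
  | unionL {α β χ} : TestIn α χ → TestIn (.union α β) χ
  | unionR {α β χ} : TestIn β χ → TestIn (.union α β) χ
  | star {α χ} : TestIn α χ → TestIn (.star α) χ

lemma TestIn.size {α χ} (h : TestIn α χ) : formSize χ < progSize α := by
  induction h <;> simp [progSize, formSize] <;> omega

lemma fl_test_box {φ α ψ χ} (h : FL φ (.box α ψ)) (ht : TestIn α χ) : FL φ χ := by
  induction ht generalizing ψ with
  | test => exact FL.testBox h
  | seqL _ ih => exact ih (FL.seqBox h)
  | seqR _ ih => exact ih (FL.boxSub (FL.seqBox h))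
  | unionL _ ih => exact ih (FL.unionBoxL h)
  | unionR _ ih => exact ih (FL.unionBoxR h)
  | star _ ih => exact ih (FL.starBox h)

lemma fl_test_dia {φ α ψ χ} (h : FL φ (.dia α ψ)) (ht : TestIn α χ) : FL φ χ := by
  induction ht generalizing ψ with
  | test => exact FL.testDia h
  | seqL _ ih => exact ih (FL.seqDia h)
  | seqR _ ih => exact ih (FL.diaSub (FL.seqDia h))
  | unionL _ ih => exact ih (FL.unionDiaL h)
  | unionR _ ih => exact ih (FL.unionDiaR h)
  | star _ ih => exact ih (FL.starDia h)

/-- Forward direction for programs: relations are preserved by the filtration map. -/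
lemma progRel_filt (M : DynModel) (φ : DynForm) :
    ∀ α, (∀ χ, TestIn α χ → ∀ z : M.S, dverify M z χ →
        dverify (filtModel M φ) (Quotient.mk (flSetoid M φ) z) χ) →
      ∀ x y : M.S, progRel M α x y →
        progRel (filtModel M φ) α (Quotient.mk (flSetoid M φ) x)
          (Quotient.mk (flSetoid M φ) y) := by
  suffices H : ∀ m α, progSize α < m → (∀ χ, TestIn α χ → ∀ z : M.S, dverify M z χ →
        dverify (filtModel M φ) (Quotient.mk (flSetoid M φ) z) χ) →
      ∀ x y : M.S, progRel M α x y →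
        progRel (filtModel M φ) α (Quotient.mk (flSetoid M φ) x)
          (Quotient.mk (flSetoid M φ) y) by
    intro α; exact H (progSize α + 1) α (Nat.lt_succ_self _)
  intro m
  induction m with
  | zero => intro α h; omega
  | succ m ihm =>
  intro α hsz
  have hsz' := progSize_pos α
  cases α with
  | atom a =>
      intro _ x y h
      simp only [progRel, filtModel]
      exact ⟨x, y, rfl, rfl, h⟩
  | seq α β =>
      have pα := progSize_pos α; have pβ := progSize_pos β
      have hα : progSize α < m := by simp [progSize] at hsz; omega
      have hβ : progSize β < m := by simp [progSize] at hsz; omega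
      intro ht x y h
      simp only [progRel] at h ⊢
      obtain ⟨z, h1, h2⟩ := h
      exact ⟨Quotient.mk _ z, ihm α hα (fun χ hc => ht χ (.seqL hc)) x z h1,
        ihm β hβ (fun χ hc => ht χ (.seqR hc)) z y h2⟩
  | union α β =>
      have pα := progSize_pos α; have pβ := progSize_pos β
      have hα : progSize α < m := by simp [progSize] at hsz; omega
      have hβ : progSize β < m := by simp [progSize] at hsz; omega
      intro ht x y h
      simp only [progRel] at h ⊢
      rcases h with h | h
      · exact Or.inl (ihm α hα (fun χ hc => ht χ (.unionL hc)) x y h)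
      · exact Or.inr (ihm β hβ (fun χ hc => ht χ (.unionR hc)) x y h)
  | star α =>
      have hα : progSize α < m := by simp [progSize] at hsz; omega
      intro ht x y h
      simp only [progRel] at h ⊢
      exact Relation.ReflTransGen.lift _ (fun a b hab =>
        ihm α hα (fun χ hc => ht χ (.star hc)) a b hab) x y h
  | test χ =>
      intro ht x y h
      simp only [progRel] at h ⊢
      obtain ⟨rfl, hv⟩ := h
      exact ⟨rfl, ht χ (.test χ) x hv⟩

/-- Generic "filtration back" lemma, for any ∀-shaped modal predicate. -/
lemma filt_back (M : DynModel) (φ : DynForm)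
    (F : DynForm → M.S → Prop) (Mo : DynProg → DynForm → DynForm)
    (hcong : ∀ θ, FL φ θ → ∀ x y : M.S, (flSetoid M φ).r x y → F θ x → F θ y)
    (hsem : ∀ α ψ x, F (Mo α ψ) x ↔ ∀ y, progRel M α x y → F ψ y)
    (hsub : ∀ α ψ, FL φ (Mo α ψ) → FL φ ψ)
    (hseq : ∀ α β ψ, FL φ (Mo (.seq α β) ψ) → FL φ (Mo α (Mo β ψ)))
    (hunL : ∀ α β ψ, FL φ (Mo (.union α β) ψ) → FL φ (Mo α ψ))
    (hunR : ∀ α β ψ, FL φ (Mo (.union α β) ψ) → FL φ (Mo β ψ))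
    (hstar : ∀ α ψ, FL φ (Mo (.star α) ψ) → FL φ (Mo α (Mo (.star α) ψ))) :
    ∀ α ψ, (∀ χ, TestIn α χ → ∀ z : M.S,
        dverify (filtModel M φ) (Quotient.mk (flSetoid M φ) z) χ → dverify M z χ) →
      FL φ (Mo α ψ) → ∀ x y : M.S, F (Mo α ψ) x →
      progRel (filtModel M φ) α (Quotient.mk (flSetoid M φ) x)
        (Quotient.mk (flSetoid M φ) y) →
      F ψ y := by
  suffices H : ∀ m α, progSize α < m → ∀ ψ, (∀ χ, TestIn α χ → ∀ z : M.S,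
        dverify (filtModel M φ) (Quotient.mk (flSetoid M φ) z) χ → dverify M z χ) →
      FL φ (Mo α ψ) → ∀ x y : M.S, F (Mo α ψ) x →
      progRel (filtModel M φ) α (Quotient.mk (flSetoid M φ) x)
        (Quotient.mk (flSetoid M φ) y) →
      F ψ y by
    intro α; exact H (progSize α + 1) α (Nat.lt_succ_self _)
  intro m
  induction m with
  | zero => intro α h; omega
  | succ m ihm =>
  intro α hsz
  cases α with
  | atom a =>
      intro ψ _ hFL x y hF hR
      simp only [progRel, filtModel] at hR
      obtain ⟨x', y', hx, hy, hr⟩ := hR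
      have ex : (flSetoid M φ).r x x' := Quotient.exact hx
      have ey : (flSetoid M φ).r y' y := Quotient.exact hy.symm
      have hF' : F (Mo (.atom a) ψ) x' := hcong _ hFL x x' ex hF
      have hr' : progRel M (.atom a) x' y' := by simp only [progRel]; exact hr
      exact hcong ψ (hsub _ _ hFL) y' y ey ((hsem _ _ _).1 hF' y' hr')
  | seq α β =>
      have pα := progSize_pos α; have pβ := progSize_pos β
      have hα : progSize α < m := by simp [progSize] at hsz; omega
      have hβ : progSize β < m := by simp [progSize] at hsz; omega
      intro ψ ht hFL x z hF hR
      simp only [progRel] at hR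
      obtain ⟨Y, h1, h2⟩ := hR
      obtain ⟨y, rfl⟩ := Quotient.exists_rep Y
      have hFL1 := hseq _ _ _ hFL
      have hF1 : F (Mo α (Mo β ψ)) x := by
        rw [hsem]; intro u hu; rw [hsem]; intro v hv
        exact (hsem _ _ _).1 hF v (by simp only [progRel]; exact ⟨u, hu, hv⟩)
      have hmid := ihm α hα _ (fun χ hc => ht χ (.seqL hc)) hFL1 x y hF1 h1
      exact ihm β hβ _ (fun χ hc => ht χ (.seqR hc)) (hsub _ _ hFL1) y z hmid h2
  | union α β =>
      have pα := progSize_pos α; have pβ := progSize_pos β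
      have hα : progSize α < m := by simp [progSize] at hsz; omega
      have hβ : progSize β < m := by simp [progSize] at hsz; omega
      intro ψ ht hFL x y hF hR
      simp only [progRel] at hR
      rcases hR with h | h
      · have hF1 : F (Mo α ψ) x := by
          rw [hsem]; intro u hu
          exact (hsem _ _ _).1 hF u (by simp only [progRel]; exact Or.inl hu)
        exact ihm α hα _ (fun χ hc => ht χ (.unionL hc)) (hunL _ _ _ hFL) x y hF1 h
      · have hF1 : F (Mo β ψ) x := by
          rw [hsem]; intro u hu
          exact (hsem _ _ _).1 hF u (by simp only [progRel]; exact Or.inr hu)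
        exact ihm β hβ _ (fun χ hc => ht χ (.unionR hc)) (hunR _ _ _ hFL) x y hF1 h
  | star α =>
      have hα : progSize α < m := by simp [progSize] at hsz; omega
      intro ψ ht hFL x y hF hR
      simp only [progRel] at hR
      have key : ∀ (X Y : (filtModel M φ).S),
          Relation.ReflTransGen (fun u v => progRel (filtModel M φ) α u v) X Y →
          ∀ x : M.S, X = Quotient.mk (flSetoid M φ) x → F (Mo (.star α) ψ) x →
          ∃ y : M.S, Y = Quotient.mk (flSetoid M φ) y ∧ F (Mo (.star α) ψ) y := by
        intro X Y h
        induction h with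
        | refl => intro x hx hFx; exact ⟨x, hx, hFx⟩
        | @tail b c h1 h2 ih2 =>
            intro x hx hFx
            obtain ⟨u, rfl, hFu⟩ := ih2 x hx hFx
            obtain ⟨v, rfl⟩ := Quotient.exists_rep c
            have hFu' : F (Mo α (Mo (.star α) ψ)) u := by
              rw [hsem]; intro p hp; rw [hsem]; intro q hq
              refine (hsem _ _ _).1 hFu q ?_
              simp only [progRel] at hq ⊢
              exact Relation.ReflTransGen.head hp hq
            exact ⟨v, rfl, ihm α hα _ (fun χ hc => ht χ (.star hc)) (hstar _ _ hFL) u v hFu' h2⟩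
      obtain ⟨y', hy, hFy⟩ := key _ _ hR x rfl hF
      have hfin : F ψ y' :=
        (hsem _ _ _).1 hFy y' (by simp only [progRel]; exact Relation.ReflTransGen.refl)
      exact hcong ψ (hsub _ _ hFL) y' y (Quotient.exact hy.symm) hfin
  | test χ =>
      intro ψ ht hFL x y hF hR
      simp only [progRel] at hR
      obtain ⟨hxy, hχ⟩ := hR
      have hvx : dverify M x χ := ht χ (.test χ) x hχ
      have hFx : F ψ x := (hsem _ _ _).1 hF x (by simp [progRel, hvx])
      exact hcong ψ (hsub _ _ hFL) x y (Quotient.exact hxy) hFx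

def back_box_ver (M : DynModel) (φ : DynForm) :=
  filt_back M φ (fun θ z => dverify M z θ) .box
    (fun θ hθ _ _ h => ((h θ hθ).1).mp)
    (fun α ψ x => by simp only [dverify])
    (fun _ _ h => h.boxSub) (fun _ _ _ h => h.seqBox)
    (fun _ _ _ h => h.unionBoxL) (fun _ _ _ h => h.unionBoxR)
    (fun _ _ h => h.starBox)

def back_box_nfal (M : DynModel) (φ : DynForm) :=
  filt_back M φ (fun θ z => ¬ dfalsify M z θ) .box
    (fun θ hθ _ _ h hn hf => hn (((h θ hθ).2).mpr hf))
    (fun α ψ x => by simp only [dfalsify, not_exists, not_and])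
    (fun _ _ h => h.boxSub) (fun _ _ _ h => h.seqBox)
    (fun _ _ _ h => h.unionBoxL) (fun _ _ _ h => h.unionBoxR)
    (fun _ _ h => h.starBox)

def back_dia_fal (M : DynModel) (φ : DynForm) :=
  filt_back M φ (fun θ z => dfalsify M z θ) .dia
    (fun θ hθ _ _ h => ((h θ hθ).2).mp)
    (fun α ψ x => by simp only [dfalsify])
    (fun _ _ h => h.diaSub) (fun _ _ _ h => h.seqDia)
    (fun _ _ _ h => h.unionDiaL) (fun _ _ _ h => h.unionDiaR)
    (fun _ _ h => h.starDia)

def back_dia_nver (M : DynModel) (φ : DynForm) :=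
  filt_back M φ (fun θ z => ¬ dverify M z θ) .dia
    (fun θ hθ _ _ h hn hf => hn (((h θ hθ).1).mpr hf))
    (fun α ψ x => by simp only [dverify, not_exists, not_and])
    (fun _ _ h => h.diaSub) (fun _ _ _ h => h.seqDia)
    (fun _ _ _ h => h.unionDiaL) (fun _ _ _ h => h.unionDiaR)
    (fun _ _ h => h.starDia)

theorem stmt19 (M : DynModel) (φ : DynForm) :
    ∀ ψ, FL φ ψ → ∀ x : M.S,
      (dverify M x ψ ↔ dverify (filtModel M φ) (Quotient.mk (flSetoid M φ) x) ψ) ∧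
      (dfalsify M x ψ ↔ dfalsify (filtModel M φ) (Quotient.mk (flSetoid M φ) x) ψ) := by
  suffices H : ∀ n ψ, formSize ψ < n → FL φ ψ → ∀ x : M.S,
      (dverify M x ψ ↔ dverify (filtModel M φ) (Quotient.mk (flSetoid M φ) x) ψ) ∧
      (dfalsify M x ψ ↔ dfalsify (filtModel M φ) (Quotient.mk (flSetoid M φ) x) ψ) by
    intro ψ hψ x
    exact H (formSize ψ + 1) ψ (Nat.lt_succ_self _) hψ x
  intro n
  induction n with
  | zero => intro ψ h; omega
  | succ n ih =>
    intro ψ hsize hFL x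
    cases ψ with
    | atom p =>
        constructor
        · simp only [dverify, filtModel]
          constructor
          · intro h; exact ⟨x, rfl, h⟩
          · rintro ⟨x', hx, h⟩
            have hr := Quotient.exact hx
            have := ((hr (.atom p) hFL).1).mpr
            simp only [dverify] at this
            exact this h
        · simp only [dfalsify, filtModel]
          constructor
          · intro h; exact ⟨x, rfl, h⟩
          · rintro ⟨x', hx, h⟩
            have hr := Quotient.exact hx
            have := ((hr (.atom p) hFL).2).mpr
            simp only [dfalsify] at this
            exact this h
    | bot => simp [dverify, dfalsify]
    | snot ψ' =>
        have ih' := ih ψ' (by simp [formSize] at hsize; omega) hFL.snot x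
        simp only [dverify, dfalsify]
        exact ⟨ih'.2, ih'.1⟩
    | and ψ₁ ψ₂ =>
        have h1 := ih ψ₁ (by simp [formSize] at hsize; omega) hFL.andL x
        have h2 := ih ψ₂ (by simp [formSize] at hsize; omega) hFL.andR x
        simp only [dverify, dfalsify]
        exact ⟨and_congr h1.1 h2.1, or_congr h1.2 h2.2⟩
    | or ψ₁ ψ₂ =>
        have h1 := ih ψ₁ (by simp [formSize] at hsize; omega) hFL.orL x
        have h2 := ih ψ₂ (by simp [formSize] at hsize; omega) hFL.orR x
        simp only [dverify, dfalsify]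
        exact ⟨or_congr h1.1 h2.1, and_congr h1.2 h2.2⟩
    | imp ψ₁ ψ₂ =>
        have h1 := ih ψ₁ (by simp [formSize] at hsize; omega) hFL.impL x
        have h2 := ih ψ₂ (by simp [formSize] at hsize; omega) hFL.impR x
        simp only [dverify, dfalsify]
        exact ⟨imp_congr h1.1 h2.1, and_congr h1.1 h2.2⟩
    | box α ψ' =>
        have hα := progSize_pos α
        have hsψ : formSize ψ' < n := by simp [formSize] at hsize; omega
        have ihψ := fun y => ih ψ' hsψ hFL.boxSub y
        have htfwd : ∀ χ, TestIn α χ → ∀ z : M.S, dverify M z χ →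
            dverify (filtModel M φ) (Quotient.mk (flSetoid M φ) z) χ := by
          intro χ hc z
          have hsχ : formSize χ < n := by
            have := hc.size; simp [formSize] at hsize; omega
          exact ((ih χ hsχ (fl_test_box hFL hc) z).1).mp
        have htbwd : ∀ χ, TestIn α χ → ∀ z : M.S,
            dverify (filtModel M φ) (Quotient.mk (flSetoid M φ) z) χ → dverify M z χ := by
          intro χ hc z
          have hsχ : formSize χ < n := by
            have := hc.size; simp [formSize] at hsize; omega
          exact ((ih χ hsχ (fl_test_box hFL hc) z).1).mpr
        constructor
        · constructor
          · intro h
            simp only [dverify]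
            intro Y hR
            obtain ⟨y, rfl⟩ := Quotient.exists_rep Y
            exact ((ihψ y).1).mp (back_box_ver M φ α ψ' htbwd hFL x y h hR)
          · intro h
            simp only [dverify] at h ⊢
            intro y hR
            exact ((ihψ y).1).mpr (h _ (progRel_filt M φ α htfwd x y hR))
        · constructor
          · intro h
            simp only [dfalsify] at h ⊢
            obtain ⟨y, hR, hf⟩ := h
            exact ⟨_, progRel_filt M φ α htfwd x y hR, ((ihψ y).2).mp hf⟩
          · intro h
            by_contra hc
            simp only [dfalsify] at h
            obtain ⟨Y, hR, hf⟩ := h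
            obtain ⟨y, rfl⟩ := Quotient.exists_rep Y
            exact back_box_nfal M φ α ψ' htbwd hFL x y hc hR (((ihψ y).2).mpr hf)
    | dia α ψ' =>
        have hα := progSize_pos α
        have hsψ : formSize ψ' < n := by simp [formSize] at hsize; omega
        have ihψ := fun y => ih ψ' hsψ hFL.diaSub y
        have htfwd : ∀ χ, TestIn α χ → ∀ z : M.S, dverify M z χ →
            dverify (filtModel M φ) (Quotient.mk (flSetoid M φ) z) χ := by
          intro χ hc z
          have hsχ : formSize χ < n := by
            have := hc.size; simp [formSize] at hsize; omega
          exact ((ih χ hsχ (fl_test_dia hFL hc) z).1).mp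
        have htbwd : ∀ χ, TestIn α χ → ∀ z : M.S,
            dverify (filtModel M φ) (Quotient.mk (flSetoid M φ) z) χ → dverify M z χ := by
          intro χ hc z
          have hsχ : formSize χ < n := by
            have := hc.size; simp [formSize] at hsize; omega
          exact ((ih χ hsχ (fl_test_dia hFL hc) z).1).mpr
        constructor
        · constructor
          · intro h
            simp only [dverify] at h ⊢
            obtain ⟨y, hR, hv⟩ := h
            exact ⟨_, progRel_filt M φ α htfwd x y hR, ((ihψ y).1).mp hv⟩
          · intro h
            by_contra hc
            simp only [dverify] at h
            obtain ⟨Y, hR, hv⟩ := h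
            obtain ⟨y, rfl⟩ := Quotient.exists_rep Y
            exact back_dia_nver M φ α ψ' htbwd hFL x y hc hR (((ihψ y).1).mpr hv)
        · constructor
          · intro h
            simp only [dfalsify]
            intro Y hR
            obtain ⟨y, rfl⟩ := Quotient.exists_rep Y
            exact ((ihψ y).2).mp (back_dia_fal M φ α ψ' htbwd hFL x y h hR)
          · intro h
            simp only [dfalsify] at h ⊢
            intro y hR
            exact ((ihψ y).2).mpr (h _ (progRel_filt M φ α htfwd x y hR))
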